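/- For all real parameters a, b, c, d, the matrix S_8^{(4)}(a,b,c,d) = S_8 ∘ EXP(i·R(a,b,c,d)) is a complex Hadamard matrix, where R is the 8×8 affine phase matrix with rows (0,...,0), (0,d,a,a−d,d,0,a−d,a), (0,d,a,a−d,d,0,a−d,a), (0,d,d,0,b,b−d,b−d,b), (0,c,d,c−d,d,c−d,0,c), (0,c,d,c−d,d,c−d,0,c), (0,...,0), (0,d,d,0,b,b−d,b−d,b). -/

import Mathlib

open Matrix Complex Real

/-- A complex Hadamard matrix: all entries unimodular and rows pairwise orthogonal. -/
def IsCHadamard {ι : Type*} [Fintype ι] [DecidableEq ι] (H : Matrix ι ι ℂ) : Prop :=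
  (∀ i j, ‖H i j‖ = 1) ∧ H * Hᴴ = (Fintype.card ι : ℂ) • 1

/-- The log-matrix (times 4) of `S₈`. -/
def M8 : Matrix (Fin 8) (Fin 8) ℕ :=
  !![0,0,0,0,0,0,0,0;
     0,2,1,3,0,2,1,3;
     0,2,3,1,0,2,3,1;
     0,0,2,2,1,1,3,3;
     0,1,0,1,2,3,2,3;
     0,3,0,3,2,1,2,1;
     0,2,2,0,2,0,0,2;
     0,0,2,2,3,3,1,1]

/-- The affine phase matrix `R⁽⁴⁾₈(a,b,c,d)`. -/
def R8 (a b c d : ℝ) : Matrix (Fin 8) (Fin 8) ℝ :=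
  !![0,0,0,0,0,0,0,0;
     0,d,a,a-d,d,0,a-d,a;
     0,d,a,a-d,d,0,a-d,a;
     0,d,d,0,b,b-d,b-d,b;
     0,c,d,c-d,d,c-d,0,c;
     0,c,d,c-d,d,c-d,0,c;
     0,0,0,0,0,0,0,0;
     0,d,d,0,b,b-d,b-d,b]

lemma exp_pi_div_two_mul_I' : Complex.exp ((π/2 : ℝ) * Complex.I) = Complex.I := by
  rw [Complex.exp_mul_I, ← Complex.ofReal_cos, ← Complex.ofReal_sin,
    Real.cos_pi_div_two, Real.sin_pi_div_two]
  simp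

lemma expM (m : ℕ) : Complex.exp (2 * (π:ℂ) * Complex.I * (m:ℂ) / 4) = Complex.I ^ m := by
  have h : Complex.exp (2 * (π:ℂ) * Complex.I * (m:ℂ) / 4)
      = Complex.exp (((π/2 : ℝ) : ℂ) * Complex.I) ^ m := by
    rw [← Complex.exp_nat_mul]
    congr 1
    push_cast
    ring
  rw [h, exp_pi_div_two_mul_I']

lemma key (m m' : ℕ) (r r' : ℝ) :
    Complex.exp (2 * (π:ℂ) * Complex.I * (m:ℂ) / 4) * Complex.exp (Complex.I * (r:ℂ)) *
      star (Complex.exp (2 * (π:ℂ) * Complex.I * (m':ℂ) / 4) * Complex.exp (Complex.I * (r':ℂ)))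
    = Complex.I ^ m * (-Complex.I) ^ m' * Complex.exp (Complex.I * ((r:ℂ) - (r':ℂ))) := by
  have h1 : star (Complex.exp (2 * (π:ℂ) * Complex.I * (m':ℂ) / 4)) = (-Complex.I) ^ m' := by
    rw [Complex.star_def, ← Complex.exp_conj]
    have h : (starRingEnd ℂ) (2 * (π:ℂ) * Complex.I * (m':ℂ) / 4)
        = -(2 * (π:ℂ) * Complex.I * (m':ℂ) / 4) := by
      rw [map_div₀, _root_.map_mul, _root_.map_mul, _root_.map_mul, Complex.conj_I,
        map_natCast, map_ofNat, Complex.conj_ofReal, map_ofNat]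
      ring
    rw [h, Complex.exp_neg, expM, ← inv_pow, Complex.inv_I]
  have h2 : star (Complex.exp (Complex.I * (r':ℂ))) = Complex.exp (-(Complex.I * (r':ℂ))) := by
    rw [Complex.star_def, ← Complex.exp_conj]
    congr 1
    simp [Complex.conj_I]
  rw [star_mul', h1, h2, expM,
    show Complex.I * ((r:ℂ) - (r':ℂ)) = Complex.I * (r:ℂ) + -(Complex.I * (r':ℂ)) by ring,
    Complex.exp_add]
  ring

theorem Mb_0_0 : M8 ⟨0, by omega⟩ 0 = 0 := rfl
theorem Rb_0_0 (a b c d : ℝ) : R8 a b c d ⟨0, by omega⟩ 0 = 0 := rfl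
theorem Mb_0_1 : M8 ⟨0, by omega⟩ 1 = 0 := rfl
theorem Rb_0_1 (a b c d : ℝ) : R8 a b c d ⟨0, by omega⟩ 1 = 0 := rfl
theorem Mb_0_2 : M8 ⟨0, by omega⟩ 2 = 0 := rfl
theorem Rb_0_2 (a b c d : ℝ) : R8 a b c d ⟨0, by omega⟩ 2 = 0 := rfl
theorem Mb_0_3 : M8 ⟨0, by omega⟩ 3 = 0 := rfl
theorem Rb_0_3 (a b c d : ℝ) : R8 a b c d ⟨0, by omega⟩ 3 = 0 := rfl
theorem Mb_0_4 : M8 ⟨0, by omega⟩ 4 = 0 := rfl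
theorem Rb_0_4 (a b c d : ℝ) : R8 a b c d ⟨0, by omega⟩ 4 = 0 := rfl
theorem Mb_0_5 : M8 ⟨0, by omega⟩ 5 = 0 := rfl
theorem Rb_0_5 (a b c d : ℝ) : R8 a b c d ⟨0, by omega⟩ 5 = 0 := rfl
theorem Mb_0_6 : M8 ⟨0, by omega⟩ 6 = 0 := rfl
theorem Rb_0_6 (a b c d : ℝ) : R8 a b c d ⟨0, by omega⟩ 6 = 0 := rfl
theorem Mb_0_7 : M8 ⟨0, by omega⟩ 7 = 0 := rfl
theorem Rb_0_7 (a b c d : ℝ) : R8 a b c d ⟨0, by omega⟩ 7 = 0 := rfl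
theorem Mb_1_0 : M8 ⟨1, by omega⟩ 0 = 0 := rfl
theorem Rb_1_0 (a b c d : ℝ) : R8 a b c d ⟨1, by omega⟩ 0 = 0 := rfl
theorem Mb_1_1 : M8 ⟨1, by omega⟩ 1 = 2 := rfl
theorem Rb_1_1 (a b c d : ℝ) : R8 a b c d ⟨1, by omega⟩ 1 = d := rfl
theorem Mb_1_2 : M8 ⟨1, by omega⟩ 2 = 1 := rfl
theorem Rb_1_2 (a b c d : ℝ) : R8 a b c d ⟨1, by omega⟩ 2 = a := rfl
theorem Mb_1_3 : M8 ⟨1, by omega⟩ 3 = 3 := rfl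
theorem Rb_1_3 (a b c d : ℝ) : R8 a b c d ⟨1, by omega⟩ 3 = a-d := rfl
theorem Mb_1_4 : M8 ⟨1, by omega⟩ 4 = 0 := rfl
theorem Rb_1_4 (a b c d : ℝ) : R8 a b c d ⟨1, by omega⟩ 4 = d := rfl
theorem Mb_1_5 : M8 ⟨1, by omega⟩ 5 = 2 := rfl
theorem Rb_1_5 (a b c d : ℝ) : R8 a b c d ⟨1, by omega⟩ 5 = 0 := rfl
theorem Mb_1_6 : M8 ⟨1, by omega⟩ 6 = 1 := rfl
theorem Rb_1_6 (a b c d : ℝ) : R8 a b c d ⟨1, by omega⟩ 6 = a-d := rfl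
theorem Mb_1_7 : M8 ⟨1, by omega⟩ 7 = 3 := rfl
theorem Rb_1_7 (a b c d : ℝ) : R8 a b c d ⟨1, by omega⟩ 7 = a := rfl
theorem Mb_2_0 : M8 ⟨2, by omega⟩ 0 = 0 := rfl
theorem Rb_2_0 (a b c d : ℝ) : R8 a b c d ⟨2, by omega⟩ 0 = 0 := rfl
theorem Mb_2_1 : M8 ⟨2, by omega⟩ 1 = 2 := rfl
theorem Rb_2_1 (a b c d : ℝ) : R8 a b c d ⟨2, by omega⟩ 1 = d := rfl
theorem Mb_2_2 : M8 ⟨2, by omega⟩ 2 = 3 := rfl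
theorem Rb_2_2 (a b c d : ℝ) : R8 a b c d ⟨2, by omega⟩ 2 = a := rfl
theorem Mb_2_3 : M8 ⟨2, by omega⟩ 3 = 1 := rfl
theorem Rb_2_3 (a b c d : ℝ) : R8 a b c d ⟨2, by omega⟩ 3 = a-d := rfl
theorem Mb_2_4 : M8 ⟨2, by omega⟩ 4 = 0 := rfl
theorem Rb_2_4 (a b c d : ℝ) : R8 a b c d ⟨2, by omega⟩ 4 = d := rfl
theorem Mb_2_5 : M8 ⟨2, by omega⟩ 5 = 2 := rfl
theorem Rb_2_5 (a b c d : ℝ) : R8 a b c d ⟨2, by omega⟩ 5 = 0 := rfl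
theorem Mb_2_6 : M8 ⟨2, by omega⟩ 6 = 3 := rfl
theorem Rb_2_6 (a b c d : ℝ) : R8 a b c d ⟨2, by omega⟩ 6 = a-d := rfl
theorem Mb_2_7 : M8 ⟨2, by omega⟩ 7 = 1 := rfl
theorem Rb_2_7 (a b c d : ℝ) : R8 a b c d ⟨2, by omega⟩ 7 = a := rfl
theorem Mb_3_0 : M8 ⟨3, by omega⟩ 0 = 0 := rfl
theorem Rb_3_0 (a b c d : ℝ) : R8 a b c d ⟨3, by omega⟩ 0 = 0 := rfl
theorem Mb_3_1 : M8 ⟨3, by omega⟩ 1 = 0 := rfl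
theorem Rb_3_1 (a b c d : ℝ) : R8 a b c d ⟨3, by omega⟩ 1 = d := rfl
theorem Mb_3_2 : M8 ⟨3, by omega⟩ 2 = 2 := rfl
theorem Rb_3_2 (a b c d : ℝ) : R8 a b c d ⟨3, by omega⟩ 2 = d := rfl
theorem Mb_3_3 : M8 ⟨3, by omega⟩ 3 = 2 := rfl
theorem Rb_3_3 (a b c d : ℝ) : R8 a b c d ⟨3, by omega⟩ 3 = 0 := rfl
theorem Mb_3_4 : M8 ⟨3, by omega⟩ 4 = 1 := rfl
theorem Rb_3_4 (a b c d : ℝ) : R8 a b c d ⟨3, by omega⟩ 4 = b := rfl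
theorem Mb_3_5 : M8 ⟨3, by omega⟩ 5 = 1 := rfl
theorem Rb_3_5 (a b c d : ℝ) : R8 a b c d ⟨3, by omega⟩ 5 = b-d := rfl
theorem Mb_3_6 : M8 ⟨3, by omega⟩ 6 = 3 := rfl
theorem Rb_3_6 (a b c d : ℝ) : R8 a b c d ⟨3, by omega⟩ 6 = b-d := rfl
theorem Mb_3_7 : M8 ⟨3, by omega⟩ 7 = 3 := rfl
theorem Rb_3_7 (a b c d : ℝ) : R8 a b c d ⟨3, by omega⟩ 7 = b := rfl
theorem Mb_4_0 : M8 ⟨4, by omega⟩ 0 = 0 := rfl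
theorem Rb_4_0 (a b c d : ℝ) : R8 a b c d ⟨4, by omega⟩ 0 = 0 := rfl
theorem Mb_4_1 : M8 ⟨4, by omega⟩ 1 = 1 := rfl
theorem Rb_4_1 (a b c d : ℝ) : R8 a b c d ⟨4, by omega⟩ 1 = c := rfl
theorem Mb_4_2 : M8 ⟨4, by omega⟩ 2 = 0 := rfl
theorem Rb_4_2 (a b c d : ℝ) : R8 a b c d ⟨4, by omega⟩ 2 = d := rfl
theorem Mb_4_3 : M8 ⟨4, by omega⟩ 3 = 1 := rfl
theorem Rb_4_3 (a b c d : ℝ) : R8 a b c d ⟨4, by omega⟩ 3 = c-d := rfl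
theorem Mb_4_4 : M8 ⟨4, by omega⟩ 4 = 2 := rfl
theorem Rb_4_4 (a b c d : ℝ) : R8 a b c d ⟨4, by omega⟩ 4 = d := rfl
theorem Mb_4_5 : M8 ⟨4, by omega⟩ 5 = 3 := rfl
theorem Rb_4_5 (a b c d : ℝ) : R8 a b c d ⟨4, by omega⟩ 5 = c-d := rfl
theorem Mb_4_6 : M8 ⟨4, by omega⟩ 6 = 2 := rfl
theorem Rb_4_6 (a b c d : ℝ) : R8 a b c d ⟨4, by omega⟩ 6 = 0 := rfl
theorem Mb_4_7 : M8 ⟨4, by omega⟩ 7 = 3 := rfl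
theorem Rb_4_7 (a b c d : ℝ) : R8 a b c d ⟨4, by omega⟩ 7 = c := rfl
theorem Mb_5_0 : M8 ⟨5, by omega⟩ 0 = 0 := rfl
theorem Rb_5_0 (a b c d : ℝ) : R8 a b c d ⟨5, by omega⟩ 0 = 0 := rfl
theorem Mb_5_1 : M8 ⟨5, by omega⟩ 1 = 3 := rfl
theorem Rb_5_1 (a b c d : ℝ) : R8 a b c d ⟨5, by omega⟩ 1 = c := rfl
theorem Mb_5_2 : M8 ⟨5, by omega⟩ 2 = 0 := rfl
theorem Rb_5_2 (a b c d : ℝ) : R8 a b c d ⟨5, by omega⟩ 2 = d := rfl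
theorem Mb_5_3 : M8 ⟨5, by omega⟩ 3 = 3 := rfl
theorem Rb_5_3 (a b c d : ℝ) : R8 a b c d ⟨5, by omega⟩ 3 = c-d := rfl
theorem Mb_5_4 : M8 ⟨5, by omega⟩ 4 = 2 := rfl
theorem Rb_5_4 (a b c d : ℝ) : R8 a b c d ⟨5, by omega⟩ 4 = d := rfl
theorem Mb_5_5 : M8 ⟨5, by omega⟩ 5 = 1 := rfl
theorem Rb_5_5 (a b c d : ℝ) : R8 a b c d ⟨5, by omega⟩ 5 = c-d := rfl
theorem Mb_5_6 : M8 ⟨5, by omega⟩ 6 = 2 := rfl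
theorem Rb_5_6 (a b c d : ℝ) : R8 a b c d ⟨5, by omega⟩ 6 = 0 := rfl
theorem Mb_5_7 : M8 ⟨5, by omega⟩ 7 = 1 := rfl
theorem Rb_5_7 (a b c d : ℝ) : R8 a b c d ⟨5, by omega⟩ 7 = c := rfl
theorem Mb_6_0 : M8 ⟨6, by omega⟩ 0 = 0 := rfl
theorem Rb_6_0 (a b c d : ℝ) : R8 a b c d ⟨6, by omega⟩ 0 = 0 := rfl
theorem Mb_6_1 : M8 ⟨6, by omega⟩ 1 = 2 := rfl
theorem Rb_6_1 (a b c d : ℝ) : R8 a b c d ⟨6, by omega⟩ 1 = 0 := rfl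
theorem Mb_6_2 : M8 ⟨6, by omega⟩ 2 = 2 := rfl
theorem Rb_6_2 (a b c d : ℝ) : R8 a b c d ⟨6, by omega⟩ 2 = 0 := rfl
theorem Mb_6_3 : M8 ⟨6, by omega⟩ 3 = 0 := rfl
theorem Rb_6_3 (a b c d : ℝ) : R8 a b c d ⟨6, by omega⟩ 3 = 0 := rfl
theorem Mb_6_4 : M8 ⟨6, by omega⟩ 4 = 2 := rfl
theorem Rb_6_4 (a b c d : ℝ) : R8 a b c d ⟨6, by omega⟩ 4 = 0 := rfl
theorem Mb_6_5 : M8 ⟨6, by omega⟩ 5 = 0 := rfl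
theorem Rb_6_5 (a b c d : ℝ) : R8 a b c d ⟨6, by omega⟩ 5 = 0 := rfl
theorem Mb_6_6 : M8 ⟨6, by omega⟩ 6 = 0 := rfl
theorem Rb_6_6 (a b c d : ℝ) : R8 a b c d ⟨6, by omega⟩ 6 = 0 := rfl
theorem Mb_6_7 : M8 ⟨6, by omega⟩ 7 = 2 := rfl
theorem Rb_6_7 (a b c d : ℝ) : R8 a b c d ⟨6, by omega⟩ 7 = 0 := rfl
theorem Mb_7_0 : M8 ⟨7, by omega⟩ 0 = 0 := rfl
theorem Rb_7_0 (a b c d : ℝ) : R8 a b c d ⟨7, by omega⟩ 0 = 0 := rfl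
theorem Mb_7_1 : M8 ⟨7, by omega⟩ 1 = 0 := rfl
theorem Rb_7_1 (a b c d : ℝ) : R8 a b c d ⟨7, by omega⟩ 1 = d := rfl
theorem Mb_7_2 : M8 ⟨7, by omega⟩ 2 = 2 := rfl
theorem Rb_7_2 (a b c d : ℝ) : R8 a b c d ⟨7, by omega⟩ 2 = d := rfl
theorem Mb_7_3 : M8 ⟨7, by omega⟩ 3 = 2 := rfl
theorem Rb_7_3 (a b c d : ℝ) : R8 a b c d ⟨7, by omega⟩ 3 = 0 := rfl
theorem Mb_7_4 : M8 ⟨7, by omega⟩ 4 = 3 := rfl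
theorem Rb_7_4 (a b c d : ℝ) : R8 a b c d ⟨7, by omega⟩ 4 = b := rfl
theorem Mb_7_5 : M8 ⟨7, by omega⟩ 5 = 3 := rfl
theorem Rb_7_5 (a b c d : ℝ) : R8 a b c d ⟨7, by omega⟩ 5 = b-d := rfl
theorem Mb_7_6 : M8 ⟨7, by omega⟩ 6 = 1 := rfl
theorem Rb_7_6 (a b c d : ℝ) : R8 a b c d ⟨7, by omega⟩ 6 = b-d := rfl
theorem Mb_7_7 : M8 ⟨7, by omega⟩ 7 = 1 := rfl
theorem Rb_7_7 (a b c d : ℝ) : R8 a b c d ⟨7, by omega⟩ 7 = b := rfl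

lemma I2' : Complex.I ^ 2 = -1 := Complex.I_sq
lemma I3' : Complex.I ^ 3 = -Complex.I := by rw [pow_succ, I2']; ring
lemma nI2' : (-Complex.I) ^ 2 = -1 := by rw [neg_pow, I2']; ring
lemma nI3' : (-Complex.I) ^ 3 = Complex.I := by rw [neg_pow, I3']; ring

set_option maxHeartbeats 1000000 in
/-- The 4-parameter affine family `S₈⁽⁴⁾(a,b,c,d) = S₈ ∘ EXP(i·R⁽⁴⁾₈(a,b,c,d))`
consists of complex Hadamard matrices, for all real `a, b, c, d`. -/
theorem S8_family_isHadamard (a b c d : ℝ) :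
    IsCHadamard (Matrix.of fun j k : Fin 8 =>
      Complex.exp (2 * π * Complex.I * (M8 j k : ℂ) / 4) *
        Complex.exp (Complex.I * (R8 a b c d j k : ℂ))) := by
  constructor
  · intro i j
    simp only [Matrix.of_apply]
    rw [norm_mul, Complex.norm_exp, Complex.norm_exp]
    norm_num [Complex.div_re, Complex.mul_re, Complex.mul_im]
  · ext i j
    rw [Matrix.mul_apply]
    simp only [Matrix.conjTranspose_apply, Matrix.of_apply, Matrix.smul_apply,
      Matrix.one_apply, Fintype.card_fin, smul_eq_mul]
    fin_cases i <;> fin_cases j <;>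
      simp only [Fin.sum_univ_eight, Mb_0_0, Rb_0_0, Mb_0_1, Rb_0_1, Mb_0_2, Rb_0_2, Mb_0_3, Rb_0_3, Mb_0_4, Rb_0_4, Mb_0_5, Rb_0_5, Mb_0_6, Rb_0_6, Mb_0_7, Rb_0_7, Mb_1_0, Rb_1_0, Mb_1_1, Rb_1_1, Mb_1_2, Rb_1_2, Mb_1_3, Rb_1_3, Mb_1_4, Rb_1_4, Mb_1_5, Rb_1_5, Mb_1_6, Rb_1_6, Mb_1_7, Rb_1_7, Mb_2_0, Rb_2_0, Mb_2_1, Rb_2_1, Mb_2_2, Rb_2_2, Mb_2_3, Rb_2_3, Mb_2_4, Rb_2_4, Mb_2_5, Rb_2_5, Mb_2_6, Rb_2_6, Mb_2_7, Rb_2_7, Mb_3_0, Rb_3_0, Mb_3_1, Rb_3_1, Mb_3_2, Rb_3_2, Mb_3_3, Rb_3_3, Mb_3_4, Rb_3_4, Mb_3_5, Rb_3_5, Mb_3_6, Rb_3_6, Mb_3_7, Rb_3_7, Mb_4_0, Rb_4_0, Mb_4_1, Rb_4_1, Mb_4_2, Rb_4_2, Mb_4_3, Rb_4_3, Mb_4_4,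 Rb_4_4, Mb_4_5, Rb_4_5, Mb_4_6, Rb_4_6, Mb_4_7, Rb_4_7, Mb_5_0, Rb_5_0, Mb_5_1, Rb_5_1, Mb_5_2, Rb_5_2, Mb_5_3, Rb_5_3, Mb_5_4, Rb_5_4, Mb_5_5, Rb_5_5, Mb_5_6, Rb_5_6, Mb_5_7, Rb_5_7, Mb_6_0, Rb_6_0, Mb_6_1, Rb_6_1, Mb_6_2, Rb_6_2, Mb_6_3, Rb_6_3, Mb_6_4, Rb_6_4, Mb_6_5, Rb_6_5, Mb_6_6, Rb_6_6, Mb_6_7, Rb_6_7, Mb_7_0, Rb_7_0, Mb_7_1, Rb_7_1, Mb_7_2, Rb_7_2, Mb_7_3, Rb_7_3, Mb_7_4, Rb_7_4, Mb_7_5, Rb_7_5, Mb_7_6, Rb_7_6, Mb_7_7, Rb_7_7, key, I2', I3', nI2', nI3',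
        pow_zero, pow_one, Fin.mk.injEq, Nat.succ_ne_zero, reduceIte, Nat.reduceEqDiff] <;>
      push_cast <;>
      ring_nf <;>
      norm_num
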